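/- Let Ω ⊆ ℝ² be open, v ∈ C^∞(Ω), β ∈ ℝ, and ε > 0. Define G_ε : Ω → ℝ² by G_ε(x) = (|Dv(x)|² + ε)^{β/2} Dv(x). Then at every point of Ω: −det DG_ε = (1/2)(|Dv|² + ε)^{β} (|D²v|² − (Δv)²) + β (|Dv|² + ε)^{β−1} (|D²v Dv|² − (Δv)(Δ∞v)). Moreover, if |Dv| > 0 everywhere in Ω, the same identity holds with ε = 0. -/

import Mathlib

open Real MeasureTheory
open scoped RealInnerProductSpace

noncomputable section

/-- The Euclidean plane ℝ². -/
abbrev E2 : Type := EuclideanSpace ℝ (Fin 2)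

/-- Standard basis vector. -/
def ee (i : Fin 2) : E2 := EuclideanSpace.single i (1 : ℝ)

/-- Partial derivative ∂ᵢf. -/
def pd (i : Fin 2) (f : E2 → ℝ) (x : E2) : ℝ := fderiv ℝ f x (ee i)

/-- Second partial derivative ∂ᵢ∂ⱼf. -/
def pd2 (i j : Fin 2) (f : E2 → ℝ) (x : E2) : ℝ := pd i (pd j f) x

/-- |Df|², squared Euclidean norm of the gradient. -/
def gradSq (f : E2 → ℝ) (x : E2) : ℝ := (pd 0 f x) ^ 2 + (pd 1 f x) ^ 2

/-- |Df|, Euclidean norm of the gradient. -/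
def gradNorm (f : E2 → ℝ) (x : E2) : ℝ := Real.sqrt (gradSq f x)

/-- Laplacian Δf = tr D²f. -/
def lap (f : E2 → ℝ) (x : E2) : ℝ := pd2 0 0 f x + pd2 1 1 f x

/-- ∞-Laplacian Δ∞f = D²f Df · Df. -/
def infLap (f : E2 → ℝ) (x : E2) : ℝ :=
  pd2 0 0 f x * pd 0 f x * pd 0 f x + pd2 0 1 f x * pd 0 f x * pd 1 f x +
  pd2 1 0 f x * pd 1 f x * pd 0 f x + pd2 1 1 f x * pd 1 f x * pd 1 f x

/-- |D²f|², squared Frobenius norm of the Hessian. -/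
def hessFrobSq (f : E2 → ℝ) (x : E2) : ℝ :=
  (pd2 0 0 f x) ^ 2 + (pd2 0 1 f x) ^ 2 + (pd2 1 0 f x) ^ 2 + (pd2 1 1 f x) ^ 2

/-- det D²f, determinant of the Hessian. -/
def detHess (f : E2 → ℝ) (x : E2) : ℝ :=
  pd2 0 0 f x * pd2 1 1 f x - pd2 0 1 f x * pd2 1 0 f x

/-- |D²f Df|². -/
def hessGradSq (f : E2 → ℝ) (x : E2) : ℝ :=
  (pd2 0 0 f x * pd 0 f x + pd2 0 1 f x * pd 1 f x) ^ 2 +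
  (pd2 1 0 f x * pd 0 f x + pd2 1 1 f x * pd 1 f x) ^ 2

/-- Jacobian determinant of the planar map with components `F 0`, `F 1`. -/
def jdet (F : Fin 2 → E2 → ℝ) (x : E2) : ℝ :=
  pd 0 (F 0) x * pd 1 (F 1) x - pd 1 (F 0) x * pd 0 (F 1) x

/-- Squared Frobenius norm of the Jacobian of the planar map with components `F 0`, `F 1`. -/
def jFrobSq (F : Fin 2 → E2 → ℝ) (x : E2) : ℝ :=
  (pd 0 (F 0) x) ^ 2 + (pd 1 (F 0) x) ^ 2 + (pd 0 (F 1) x) ^ 2 + (pd 1 (F 1) x) ^ 2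

/-- Df · Dg. -/
def gradDot (f g : E2 → ℝ) (x : E2) : ℝ :=
  pd 0 f x * pd 0 g x + pd 1 f x * pd 1 g x

/-- D²ψ Dv · Dv. -/
def hessQuad (ψ v : E2 → ℝ) (x : E2) : ℝ :=
  pd2 0 0 ψ x * pd 0 v x * pd 0 v x + pd2 0 1 ψ x * pd 0 v x * pd 1 v x +
  pd2 1 0 ψ x * pd 1 v x * pd 0 v x + pd2 1 1 ψ x * pd 1 v x * pd 1 v x

/-- (D²v Dv) · Dψ. -/
def hessGradDot (v ψ : E2 → ℝ) (x : E2) : ℝ :=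
  (pd2 0 0 v x * pd 0 v x + pd2 0 1 v x * pd 1 v x) * pd 0 ψ x +
  (pd2 1 0 v x * pd 0 v x + pd2 1 1 v x * pd 1 v x) * pd 1 ψ x

/-- Smooth compactly supported test function on Ω. -/
def IsTestOn (ψ : E2 → ℝ) (Ω : Set E2) : Prop :=
  ContDiff ℝ (⊤ : ℕ∞) ψ ∧ HasCompactSupport ψ ∧ tsupport ψ ⊆ Ω

/-- Components of W = |Dv|⁻¹ Dv. -/
def Wcomp (v : E2 → ℝ) (i : Fin 2) : E2 → ℝ := fun y => (gradNorm v y)⁻¹ * pd i v y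

lemma key (Ω : Set E2) (hΩ : IsOpen Ω) (v : E2 → ℝ)
    (hv : ContDiffOn ℝ (⊤ : ℕ∞) v Ω) (β ε : ℝ) (x : E2) (hx : x ∈ Ω)
    (hP : 0 < gradSq v x + ε) :
    -jdet (fun i y => (gradSq v y + ε) ^ (β/2) * pd i v y) x
      = (1/2) * (gradSq v x + ε) ^ β * (hessFrobSq v x - (lap v x) ^ 2)
        + β * (gradSq v x + ε) ^ (β - 1) * (hessGradSq v x - lap v x * infLap v x) := by
  have hvx : ContDiffAt ℝ (⊤ : ℕ∞) v x := hv.contDiffAt (hΩ.mem_nhds hx)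
  have hf' : ContDiffAt ℝ (⊤ : ℕ∞) (fderiv ℝ v) x := hvx.fderiv_right (by simp)
  have hpd : ∀ j, ContDiffAt ℝ (⊤ : ℕ∞) (pd j v) x := fun j =>
    hf'.clm_apply contDiffAt_const
  have hd : ∀ j, DifferentiableAt ℝ (pd j v) x := fun j =>
    (hpd j).differentiableAt (by simp)
  have hD : ∀ j, HasFDerivAt (pd j v) (fderiv ℝ (pd j v) x) x := fun j =>
    (hd j).hasFDerivAt
  have hDe : ∀ i j, fderiv ℝ (pd j v) x (ee i) = pd2 i j v x := fun i j => rfl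
  -- symmetry of second derivatives
  have hf'' : HasFDerivAt (fderiv ℝ v) (fderiv ℝ (fderiv ℝ v) x) x :=
    (hf'.differentiableAt (by simp)).hasFDerivAt
  have hev : ∀ᶠ y in nhds x, HasFDerivAt v (fderiv ℝ v y) y := by
    filter_upwards [hΩ.mem_nhds hx] with y hy
    exact ((hv.differentiableOn (by simp) y hy).differentiableAt (hΩ.mem_nhds hy)).hasFDerivAt
  have hcomp : ∀ j, HasFDerivAt (pd j v)
      ((ContinuousLinearMap.apply ℝ ℝ (ee j)).comp (fderiv ℝ (fderiv ℝ v) x)) x := fun j =>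
    (ContinuousLinearMap.apply ℝ ℝ (ee j)).hasFDerivAt.comp x hf''
  have hpd2 : ∀ i j, pd2 i j v x = fderiv ℝ (fderiv ℝ v) x (ee i) (ee j) := fun i j => by
    rw [pd2, pd, (hcomp j).fderiv]; rfl
  have hsym : pd2 1 0 v x = pd2 0 1 v x := by
    rw [hpd2, hpd2]
    exact second_derivative_symmetric_of_eventually hev hf'' (ee 1) (ee 0)
  -- derivative of g = gradSq v + ε
  set Dg : E2 →L[ℝ] ℝ :=
    (2 * pd 0 v x) • fderiv ℝ (pd 0 v) x + (2 * pd 1 v x) • fderiv ℝ (pd 1 v) x with hDg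
  have hg : HasFDerivAt (fun y => gradSq v y + ε) Dg x := by
    have h := (((hD 0).mul (hD 0)).add ((hD 1).mul (hD 1))).add_const ε
    have hfn : (fun y => (pd 0 v y * pd 0 v y + pd 1 v y * pd 1 v y) + ε)
        = fun y => gradSq v y + ε := by
      funext y; rw [gradSq]; ring
    simp only [Pi.add_apply, Pi.mul_apply] at h
    rw [hfn] at h
    refine h.congr_fderiv ?_
    rw [hDg]; ext z; simp [smul_eq_mul]; ring
  set P := gradSq v x + ε with hPdef
  have hA : HasFDerivAt (fun y => (gradSq v y + ε) ^ (β/2))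
      ((β/2 * P ^ (β/2 - 1)) • Dg) x := hg.rpow_const (Or.inl hP.ne')
  have hF : ∀ j, HasFDerivAt (fun y => (gradSq v y + ε) ^ (β/2) * pd j v y)
      (P ^ (β/2) • (fderiv ℝ (pd j v) x) + pd j v x • ((β/2 * P ^ (β/2 - 1)) • Dg)) x :=
    fun j => hA.mul (hD j)
  have hpdF : ∀ i j, pd i (fun y => (gradSq v y + ε) ^ (β/2) * pd j v y) x
      = P ^ (β/2) * pd2 i j v x + pd j v x * ((β/2 * P ^ (β/2 - 1)) *
          (2 * pd 0 v x * pd2 i 0 v x + 2 * pd 1 v x * pd2 i 1 v x)) := by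
    intro i j
    rw [pd, (hF j).fderiv]
    simp [hDg, hDe, ContinuousLinearMap.add_apply, ContinuousLinearMap.smul_apply,
      smul_eq_mul]
    ring
  have e1 : P ^ β = P ^ (β/2) * P ^ (β/2) := by
    rw [← Real.rpow_add hP]; congr 1; ring
  have e2 : P ^ (β - 1) = P ^ (β/2) * P ^ (β/2 - 1) := by
    rw [← Real.rpow_add hP]; congr 1; ring
  have hj : jdet (fun i y => (gradSq v y + ε) ^ (β/2) * pd i v y) x
      = pd 0 (fun y => (gradSq v y + ε) ^ (β/2) * pd 0 v y) x *
          pd 1 (fun y => (gradSq v y + ε) ^ (β/2) * pd 1 v y) x -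
        pd 1 (fun y => (gradSq v y + ε) ^ (β/2) * pd 0 v y) x *
          pd 0 (fun y => (gradSq v y + ε) ^ (β/2) * pd 1 v y) x := rfl
  rw [hj, hpdF, hpdF, hpdF, hpdF, hessFrobSq, lap, infLap, hessGradSq, hsym, e1, e2]
  ring

/-- pointwise structural identity for −det D[(|Dv|²+ε)^{β/2}Dv],
and the same identity with ε = 0 when |Dv| > 0 everywhere. -/
theorem stmt_4 (Ω : Set E2) (hΩ : IsOpen Ω) (v : E2 → ℝ)
    (hv : ContDiffOn ℝ (⊤ : ℕ∞) v Ω) (β : ℝ) (ε : ℝ) (hε : 0 < ε) :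
    (∀ x ∈ Ω,
      -jdet (fun i y => (gradSq v y + ε) ^ (β/2) * pd i v y) x
        = (1/2) * (gradSq v x + ε) ^ β * (hessFrobSq v x - (lap v x) ^ 2)
          + β * (gradSq v x + ε) ^ (β - 1) * (hessGradSq v x - lap v x * infLap v x)) ∧
    ((∀ x ∈ Ω, 0 < gradNorm v x) →
      ∀ x ∈ Ω,
      -jdet (fun i y => (gradSq v y) ^ (β/2) * pd i v y) x
        = (1/2) * (gradSq v x) ^ β * (hessFrobSq v x - (lap v x) ^ 2)
          + β * (gradSq v x) ^ (β - 1) * (hessGradSq v x - lap v x * infLap v x)) := by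
  constructor
  · intro x hx
    exact key Ω hΩ v hv β ε x hx
      (add_pos_of_nonneg_of_pos (by rw [gradSq]; positivity) hε)
  · intro hgn x hx
    have h0 : 0 < gradSq v x := by
      have hh := hgn x hx
      rw [gradNorm] at hh
      exact Real.sqrt_pos.mp hh
    have h := key Ω hΩ v hv β 0 x hx (by rw [add_zero]; exact h0)
    simpa only [add_zero] using h
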